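/- For the safety Bellman backup T with margin ℓ and discount γ ∈ [0,1), and any two bounded margin functions ℓ₁, ℓ₂ with corresponding fixed points V₁*, V₂*, one has ‖V₁* − V₂*‖_∞ ≤ ‖ℓ₁ − ℓ₂‖_∞. -/

import Mathlib

open MeasureTheory

/-- Lipschitz dependence of the fixed point on the margin: if `V₁*`, `V₂*` are the
bounded fixed points of the safety Bellman backups with margins `ℓ₁`, `ℓ₂`, then
`‖V₁* - V₂*‖_∞ ≤ ‖ℓ₁ - ℓ₂‖_∞`. -/
theorem fixed_point_margin_perturbation
    {Z A : Type*} [MeasurableSpace Z] [Nonempty Z] [Nonempty A]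
    (f : Z → A → Measure Z) (hf : ∀ z a, IsProbabilityMeasure (f z a))
    (ℓ₁ ℓ₂ : Z → ℝ) (hℓ₁ : ∃ C, ∀ z, |ℓ₁ z| ≤ C) (hℓ₂ : ∃ C, ∀ z, |ℓ₂ z| ≤ C)
    (γ : ℝ) (hγ0 : 0 ≤ γ) (hγ1 : γ < 1)
    (V₁ V₂ : Z → ℝ)
    (hV₁meas : Measurable V₁) (hV₁bdd : ∃ C, ∀ z, |V₁ z| ≤ C)
    (hV₂meas : Measurable V₂) (hV₂bdd : ∃ C, ∀ z, |V₂ z| ≤ C)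
    (hfix₁ : ∀ z, V₁ z
      = (1 - γ) * ℓ₁ z + γ * min (ℓ₁ z) (⨆ a : A, ∫ z', V₁ z' ∂(f z a)))
    (hfix₂ : ∀ z, V₂ z
      = (1 - γ) * ℓ₂ z + γ * min (ℓ₂ z) (⨆ a : A, ∫ z', V₂ z' ∂(f z a))) :
    (⨆ z : Z, |V₁ z - V₂ z|) ≤ ⨆ z : Z, |ℓ₁ z - ℓ₂ z| := by
  obtain ⟨C₁, hC₁⟩ := hV₁bdd
  obtain ⟨C₂, hC₂⟩ := hV₂bdd
  obtain ⟨K₁, hK₁⟩ := hℓ₁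
  obtain ⟨K₂, hK₂⟩ := hℓ₂
  haveI := hf
  -- integrability
  have hint₁ : ∀ z a, Integrable V₁ (f z a) := fun z a => by
    haveI := hf z a
    exact memLp_one_iff_integrable.mp
      (MemLp.of_bound hV₁meas.aestronglyMeasurable C₁
        (Filter.Eventually.of_forall fun z' => by
          simpa [Real.norm_eq_abs] using hC₁ z'))
  have hint₂ : ∀ z a, Integrable V₂ (f z a) := fun z a => by
    haveI := hf z a
    exact memLp_one_iff_integrable.mp
      (MemLp.of_bound hV₂meas.aestronglyMeasurable C₂
        (Filter.Eventually.of_forall fun z' => by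
          simpa [Real.norm_eq_abs] using hC₂ z'))
  set D : ℝ := ⨆ z : Z, |V₁ z - V₂ z| with hD
  set L : ℝ := ⨆ z : Z, |ℓ₁ z - ℓ₂ z| with hL
  have hbddV : BddAbove (Set.range fun z => |V₁ z - V₂ z|) :=
    ⟨C₁ + C₂, by rintro x ⟨z, rfl⟩
                 exact (abs_sub _ _).trans (add_le_add (hC₁ z) (hC₂ z))⟩
  have hbddL : BddAbove (Set.range fun z => |ℓ₁ z - ℓ₂ z|) :=
    ⟨K₁ + K₂, by rintro x ⟨z, rfl⟩
                 exact (abs_sub _ _).trans (add_le_add (hK₁ z) (hK₂ z))⟩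
  have hDle : ∀ z, |V₁ z - V₂ z| ≤ D := fun z => le_ciSup hbddV z
  have hLle : ∀ z, |ℓ₁ z - ℓ₂ z| ≤ L := fun z => le_ciSup hbddL z
  have hL0 : 0 ≤ L := le_trans (abs_nonneg _) (hLle (Classical.arbitrary Z))
  -- bound on sup of integrals
  have hbddI₁ : ∀ z, BddAbove (Set.range fun a => ∫ z', V₁ z' ∂(f z a)) := fun z =>
    ⟨C₁, by rintro x ⟨a, rfl⟩
            haveI := hf z a
            calc ∫ z', V₁ z' ∂(f z a) ≤ ∫ z', C₁ ∂(f z a) :=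
                  integral_mono (hint₁ z a) (integrable_const _)
                    (fun z' => (le_abs_self _).trans (hC₁ z'))
              _ = C₁ := by simp⟩
  have hbddI₂ : ∀ z, BddAbove (Set.range fun a => ∫ z', V₂ z' ∂(f z a)) := fun z =>
    ⟨C₂, by rintro x ⟨a, rfl⟩
            haveI := hf z a
            calc ∫ z', V₂ z' ∂(f z a) ≤ ∫ z', C₂ ∂(f z a) :=
                  integral_mono (hint₂ z a) (integrable_const _)
                    (fun z' => (le_abs_self _).trans (hC₂ z'))
              _ = C₂ := by simp⟩
  have hSdiff : ∀ z, |(⨆ a : A, ∫ z', V₁ z' ∂(f z a)) -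
      (⨆ a : A, ∫ z', V₂ z' ∂(f z a))| ≤ D := by
    intro z
    have key : ∀ (W₁ W₂ : Z → ℝ), (∀ z a, Integrable W₁ (f z a)) →
        (∀ z a, Integrable W₂ (f z a)) →
        BddAbove (Set.range fun a => ∫ z', W₂ z' ∂(f z a)) →
        (∀ z', W₁ z' - W₂ z' ≤ D) →
        (⨆ a : A, ∫ z', W₁ z' ∂(f z a)) ≤ (⨆ a : A, ∫ z', W₂ z' ∂(f z a)) + D := by
      intro W₁ W₂ h₁ h₂ hb hd
      refine ciSup_le fun a => ?_
      haveI := hf z a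
      have : ∫ z', W₁ z' ∂(f z a) ≤ (∫ z', W₂ z' ∂(f z a)) + D := by
        have : ∫ z', W₁ z' ∂(f z a) ≤ ∫ z', (W₂ z' + D) ∂(f z a) :=
          integral_mono (h₁ z a) ((h₂ z a).add (integrable_const _))
            (fun z' => by linarith [hd z'])
        simpa [integral_add (h₂ z a) (integrable_const D)] using this
      exact this.trans (add_le_add_left (le_ciSup hb a) D)
    rw [abs_sub_le_iff]
    constructor
    · have := key V₁ V₂ hint₁ hint₂ (hbddI₂ z)
        (fun z' => (le_abs_self _).trans (hDle z'))
      linarith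
    · have := key V₂ V₁ hint₂ hint₁ (hbddI₁ z)
        (fun z' => by have h := hDle z'; rw [abs_sub_comm] at h
                      exact (le_abs_self _).trans h)
      linarith
  -- pointwise bound
  have hpoint : ∀ z, |V₁ z - V₂ z| ≤ (1 - γ) * L + γ * max L D := by
    intro z
    rw [hfix₁ z, hfix₂ z]
    have h1 : (1 - γ) * ℓ₁ z + γ * min (ℓ₁ z) (⨆ a : A, ∫ z', V₁ z' ∂(f z a))
        - ((1 - γ) * ℓ₂ z + γ * min (ℓ₂ z) (⨆ a : A, ∫ z', V₂ z' ∂(f z a)))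
        = (1 - γ) * (ℓ₁ z - ℓ₂ z)
          + γ * (min (ℓ₁ z) (⨆ a : A, ∫ z', V₁ z' ∂(f z a))
            - min (ℓ₂ z) (⨆ a : A, ∫ z', V₂ z' ∂(f z a))) := by ring
    rw [h1]
    calc |(1 - γ) * (ℓ₁ z - ℓ₂ z)
          + γ * (min (ℓ₁ z) (⨆ a : A, ∫ z', V₁ z' ∂(f z a))
            - min (ℓ₂ z) (⨆ a : A, ∫ z', V₂ z' ∂(f z a)))|
        ≤ |(1 - γ) * (ℓ₁ z - ℓ₂ z)|
          + |γ * (min (ℓ₁ z) (⨆ a : A, ∫ z', V₁ z' ∂(f z a))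
            - min (ℓ₂ z) (⨆ a : A, ∫ z', V₂ z' ∂(f z a)))| := abs_add_le _ _
      _ ≤ (1 - γ) * L + γ * max L D := by
          rw [abs_mul, abs_mul, abs_of_nonneg (by linarith : (0:ℝ) ≤ 1 - γ),
            abs_of_nonneg hγ0]
          refine add_le_add (mul_le_mul_of_nonneg_left (hLle z) (by linarith))
            (mul_le_mul_of_nonneg_left ?_ hγ0)
          exact (abs_min_sub_min_le_max _ _ _ _).trans
            (max_le_max (hLle z) (hSdiff z))
  have hDbound : D ≤ (1 - γ) * L + γ * max L D := ciSup_le hpoint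
  by_cases h : D ≤ L
  · exact h
  · push_neg at h
    rw [max_eq_right h.le] at hDbound
    nlinarith
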